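/- Let α be an action of a discrete group G on a non-compact locally compact Hausdorff space X such that for every compact K ⊆ X and every non-empty open U ⊆ X there exists g ∈ G with α_g(K) ⊆ U. Then X is perfect (has no isolated points) and the action is topologically G-separating: for all open U₁, U₂ ⊆ X and compact K₁ ⊆ U₁, K₂ ⊆ U₂ there exist g₁, g₂ ∈ G with α_{g₁}(K₁) ⊆ U₁, α_{g₂}(K₂) ⊆ U₂ and α_{g₁}(K₁) ∩ α_{g₂}(K₂) = ∅. -/
import Mathlib


/-- If `X` is a non-compact locally compact Hausdorff space and the action `α` of
`G` moves every compact set into every non-empty open set, then `X` is perfect and the action is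
topologically `G`-separating. -/
theorem stmt16 {X G : Type*} [TopologicalSpace X] [LocallyCompactSpace X] [T2Space X]
    [Group G] (hnc : ¬ CompactSpace X)
    (α : G → X ≃ₜ X) (hα : ∀ g h x, α (g * h) x = α g (α h x))
    (htop : ∀ K : Set X, IsCompact K → ∀ U : Set X, IsOpen U → U.Nonempty →
      ∃ g : G, ⇑(α g) '' K ⊆ U) :
    (∀ x : X, ¬ IsOpen ({x} : Set X)) ∧
    (∀ U₁ U₂ : Set X, IsOpen U₁ → IsOpen U₂ → ∀ K₁ K₂ : Set X, IsCompact K₁ → IsCompact K₂ →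
      K₁ ⊆ U₁ → K₂ ⊆ U₂ →
        ∃ g₁ g₂ : G, ⇑(α g₁) '' K₁ ⊆ U₁ ∧ ⇑(α g₂) '' K₂ ⊆ U₂ ∧
          (⇑(α g₁) '' K₁) ∩ (⇑(α g₂) '' K₂) = ∅) := by
  -- α 1 is the identity
  have hone : ∀ x : X, α 1 x = x := by
    intro x
    have h := hα 1 1 x
    rw [one_mul] at h
    exact ((α 1).injective h.symm)
  -- X is infinite
  have hinf : Infinite X := by
    rw [← not_finite_iff_infinite]
    intro h
    exact hnc Finite.compactSpace
  -- Part 1: no isolated points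
  have hperf : ∀ x : X, ¬ IsOpen ({x} : Set X) := by
    intro x hx
    obtain ⟨a, b, hab⟩ := exists_pair_ne X
    have hK : IsCompact ({a, b} : Set X) := (Set.toFinite ({a, b} : Set X)).isCompact
    obtain ⟨g, hg⟩ := htop {a, b} hK {x} hx ⟨x, rfl⟩
    have ha : α g a = x := hg ⟨a, Or.inl rfl, rfl⟩
    have hb : α g b = x := hg ⟨b, Or.inr rfl, rfl⟩
    exact hab ((α g).injective (ha.trans hb.symm))
  refine ⟨hperf, ?_⟩
  intro U₁ U₂ hU₁ hU₂ K₁ K₂ hK₁ hK₂ hKU₁ hKU₂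
  rcases (U₁ ∩ U₂).eq_empty_or_nonempty with hE | hNE
  · refine ⟨1, 1, ?_, ?_, ?_⟩
    · intro y hy; obtain ⟨z, hz, rfl⟩ := hy; rw [hone]; exact hKU₁ hz
    · intro y hy; obtain ⟨z, hz, rfl⟩ := hy; rw [hone]; exact hKU₂ hz
    · apply Set.eq_empty_of_subset_empty
      rw [← hE]
      rintro y ⟨⟨z₁, hz₁, rfl⟩, ⟨z₂, hz₂, he⟩⟩
      have hz : z₂ = z₁ := (α 1).injective he
      rw [hone]
      exact ⟨hKU₁ hz₁, hKU₂ (hz ▸ hz₂)⟩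
  · obtain ⟨a, ha⟩ := hNE
    -- V := U₁ ∩ U₂ contains a second point, else it is an open singleton
    have hVopen : IsOpen (U₁ ∩ U₂) := hU₁.inter hU₂
    have : ∃ b ∈ U₁ ∩ U₂, b ≠ a := by
      by_contra h
      push_neg at h
      have : U₁ ∩ U₂ = {a} := Set.eq_singleton_iff_unique_mem.mpr ⟨ha, h⟩
      exact hperf a (this ▸ hVopen)
    obtain ⟨b, hb, hba⟩ := this
    obtain ⟨W₁, W₂, hW₁, hW₂, haW, hbW, hWd⟩ := t2_separation hba.symm
    obtain ⟨g₁, hg₁⟩ := htop K₁ hK₁ ((U₁ ∩ U₂) ∩ W₁) (hVopen.inter hW₁) ⟨a, ha, haW⟩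
    obtain ⟨g₂, hg₂⟩ := htop K₂ hK₂ ((U₁ ∩ U₂) ∩ W₂) (hVopen.inter hW₂) ⟨b, hb, hbW⟩
    refine ⟨g₁, g₂, fun y hy => ((hg₁ hy).1).1, fun y hy => ((hg₂ hy).1).2, ?_⟩
    apply Set.eq_empty_of_subset_empty
    intro y ⟨hy₁, hy₂⟩
    exact absurd (Set.mem_inter (hg₁ hy₁).2 (hg₂ hy₂).2) (by
      rw [Set.disjoint_iff_inter_eq_empty] at hWd
      simp [hWd])
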